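/- Given s > 2 and fixed digits c_1,…,c_n ∈ {1,…,s-1}, the supremum of the cylinder Δ'_{c_1…c_n} equals g_n + 1/(s^{c_1+⋯+c_n}(s-1)), where g_n = Σ_{k=1}^n c_k/s^{c_1+⋯+c_k}; this supremum is attained by the sequence continuing with c_k = 1 for all k > n. -/

import Mathlib

open Finset

/-- The term of the series: `c n / s ^ (c 1 + ... + c (n+1))` (0-indexed). -/
noncomputable def sTerm (s : ℕ) (c : ℕ → ℕ) (n : ℕ) : ℝ :=
  (c n : ℝ) / (s : ℝ) ^ (∑ k ∈ Finset.range (n + 1), c k)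

/-- `x = Σ_{k=1}^∞ c_k / s^{c_1+⋯+c_k}`. -/
noncomputable def sVal (s : ℕ) (c : ℕ → ℕ) : ℝ := ∑' n : ℕ, sTerm s c n

/-- The sequence `(c_k)` has all terms in `{1, ..., s-1}`. -/
def sValid (s : ℕ) (c : ℕ → ℕ) : Prop := ∀ k, 1 ≤ c k ∧ c k ≤ s - 1

/-- The set `S_{(s,0)}`. -/
def Sset (s : ℕ) : Set ℝ := { x | ∃ c : ℕ → ℕ, sValid s c ∧ x = sVal s c }

/-- The cylinder `Δ'_{c_1 ... c_n}` of rank `n` with base the first `n` terms of `c`. -/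
def cyl (s n : ℕ) (c : ℕ → ℕ) : Set ℝ :=
  { x | ∃ c' : ℕ → ℕ, sValid s c' ∧ (∀ k < n, c' k = c k) ∧ x = sVal s c' }

/-- The cylinder `Δ'_{c_1 ... c_n p}`: prefix of length `n` from `c`, next digit `p`. -/
def cylExt (s n : ℕ) (c : ℕ → ℕ) (p : ℕ) : Set ℝ :=
  { x | ∃ c' : ℕ → ℕ, sValid s c' ∧ (∀ k < n, c' k = c k) ∧ c' n = p ∧ x = sVal s c' }

/-- `g_n = Σ_{k=1}^n c_k / s^{c_1+⋯+c_k}`. -/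
noncomputable def gPart (s n : ℕ) (c : ℕ → ℕ) : ℝ := ∑ k ∈ Finset.range n, sTerm s c k

lemma sTerm_nonneg (s : ℕ) (c : ℕ → ℕ) (k : ℕ) : 0 ≤ sTerm s c k := by
  unfold sTerm; positivity

lemma sTerm_congr (s n : ℕ) (c c' : ℕ → ℕ) (h : ∀ k < n, c' k = c k) {k : ℕ} (hk : k < n) :
    sTerm s c' k = sTerm s c k := by
  unfold sTerm
  rw [h k hk, Finset.sum_congr rfl fun j hj => h j (lt_of_lt_of_le (Finset.mem_range.mp hj) hk)]

lemma gPart_congr (s n : ℕ) (c c' : ℕ → ℕ) (h : ∀ k < n, c' k = c k) :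
    gPart s n c' = gPart s n c :=
  Finset.sum_congr rfl fun k hk => sTerm_congr s n c c' h (Finset.mem_range.mp hk)

lemma key_ineq {x : ℝ} (hx : 1 ≤ x) (d : ℕ) : (d : ℝ) * (x - 1) + 1 ≤ x ^ d := by
  calc (d : ℝ) * (x - 1) + 1 = 1 + (d : ℝ) * (x - 1) := by ring
    _ ≤ (1 + (x - 1)) ^ d := one_add_mul_le_pow (by linarith) d
    _ = x ^ d := by ring_nf

lemma step_ineq {x : ℝ} (hx : 1 < x) (σ d : ℕ) :
    (d : ℝ) / x ^ (σ + d) + 1 / (x ^ (σ + d) * (x - 1)) ≤ 1 / (x ^ σ * (x - 1)) := by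
  have hx0 : (0:ℝ) < x := by linarith
  have hx1ne : x - 1 ≠ 0 := by intro h; linarith
  have hA : (0:ℝ) < x ^ σ := by positivity
  have hB : (0:ℝ) < x ^ d := by positivity
  have hkey := key_ineq hx.le d
  have hD : (0:ℝ) < x ^ σ * x ^ d * (x - 1) := by
    apply mul_pos (mul_pos hA hB); linarith
  have h1 : (d : ℝ) / x ^ (σ + d) + 1 / (x ^ (σ + d) * (x - 1))
      = ((d : ℝ) * (x - 1) + 1) / (x ^ σ * x ^ d * (x - 1)) := by
    rw [pow_add]; field_simp
  have h2 : 1 / (x ^ σ * (x - 1)) = x ^ d / (x ^ σ * x ^ d * (x - 1)) := by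
    field_simp
  rw [h1, h2]
  exact div_le_div_of_nonneg_right hkey hD.le


theorem stmt4 (s n : ℕ) (hs : 2 < s) (c : ℕ → ℕ) (hc : ∀ k < n, 1 ≤ c k ∧ c k ≤ s - 1) :
    IsGreatest (cyl s n c)
      (gPart s n c + 1 / ((s : ℝ) ^ (∑ k ∈ Finset.range n, c k) * ((s : ℝ) - 1))) ∧
      gPart s n c + 1 / ((s : ℝ) ^ (∑ k ∈ Finset.range n, c k) * ((s : ℝ) - 1)) =
        sVal s (fun k => if k < n then c k else 1) := by
  have hx : (2:ℝ) < (s:ℝ) := by exact_mod_cast hs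
  have hx1 : (1:ℝ) < (s:ℝ) := by linarith
  have hx0 : (0:ℝ) < (s:ℝ) := by linarith
  set x : ℝ := (s : ℝ) with hxdef
  set σ : ℕ := ∑ k ∈ Finset.range n, c k with hσdef
  set c'' : ℕ → ℕ := fun k => if k < n then c k else 1 with hc''def
  have hpre : ∀ k < n, c'' k = c k := fun k hk => by simp [hc''def, hk]
  have hone : (0:ℝ) ≤ 1 / (x ^ σ * (x - 1)) :=
    le_of_lt (div_pos one_pos (mul_pos (pow_pos hx0 σ) (by linarith)))
  have hexp : ∀ k : ℕ, ∑ j ∈ Finset.range (k + n + 1), c'' j = σ + (k + 1) := by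
    intro k
    induction k with
    | zero =>
      rw [Finset.sum_range_succ]
      have h1 : ∑ j ∈ Finset.range (0 + n), c'' j = σ := by
        simp only [Nat.zero_add]
        exact Finset.sum_congr rfl fun j hj => by
          simp [hc''def, Finset.mem_range.mp hj]
      rw [h1]
      have h2 : c'' (0 + n) = 1 := by
        show (if 0 + n < n then c (0 + n) else 1) = 1
        rw [if_neg (by omega)]
      omega
    | succ k ih =>
      have h1 : k + 1 + n + 1 = (k + n + 1) + 1 := by omega
      rw [h1, Finset.sum_range_succ, ih]
      have h2 : c'' (k + n + 1) = 1 := by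
        show (if k + n + 1 < n then c (k + n + 1) else 1) = 1
        rw [if_neg (by omega)]
      omega
  have hshift : ∀ k : ℕ, sTerm s c'' (k + n) = (x ^ (σ + 1))⁻¹ * (x⁻¹) ^ k := by
    intro k
    unfold sTerm
    have h1 : c'' (k + n) = 1 := by
      show (if k + n < n then c (k + n) else 1) = 1
      rw [if_neg (by omega)]
    rw [h1, hexp k]
    have h3 : σ + (k + 1) = (σ + 1) + k := by omega
    rw [h3, pow_add]
    push_cast
    rw [← hxdef, inv_pow]
    have hne : x ^ (σ + 1) ≠ 0 := by positivity
    have hne2 : x ^ k ≠ 0 := by positivity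
    field_simp
  have hlt : x⁻¹ < 1 := by rw [inv_lt_one_iff₀]; right; exact hx1
  have hgeo : Summable (fun k : ℕ => (x ^ (σ + 1))⁻¹ * (x⁻¹) ^ k) :=
    Summable.mul_left _ (summable_geometric_of_lt_one (by positivity) hlt)
  have hsum_shift : Summable (fun k : ℕ => sTerm s c'' (k + n)) := by
    simpa only [hshift] using hgeo
  have htsum_shift : ∑' k : ℕ, sTerm s c'' (k + n) = 1 / (x ^ σ * (x - 1)) := by
    rw [tsum_congr hshift, tsum_mul_left,
      tsum_geometric_of_lt_one (by positivity) hlt]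
    rw [pow_succ]
    have hxne : x ≠ 0 := ne_of_gt hx0
    have hx1ne : x - 1 ≠ 0 := by intro h; linarith
    have h1ne : 1 - x⁻¹ ≠ 0 := by
      intro h
      have : x⁻¹ = 1 := by linarith
      rw [inv_eq_one] at this; linarith
    field_simp
  have heq : gPart s n c + 1 / (x ^ σ * (x - 1)) = sVal s c'' := by
    unfold sVal
    rw [← Summable.sum_add_tsum_nat_add' (f := sTerm s c'') (k := n) hsum_shift, htsum_shift]
    congr 1
    exact (gPart_congr s n c c'' hpre).symm
  refine ⟨⟨⟨c'', fun k => ?_, hpre, heq⟩, ?_⟩, heq⟩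
  · by_cases hk : k < n
    · simpa [hc''def, hk] using hc k hk
    · show 1 ≤ (if k < n then c k else 1) ∧ (if k < n then c k else 1) ≤ s - 1
      rw [if_neg hk]; omega
  · rintro y ⟨c', hval', hpre', rfl⟩
    have hterm_nonneg : ∀ k, 0 ≤ sTerm s c' k := sTerm_nonneg s c'
    apply Real.tsum_le_of_sum_range_le hterm_nonneg
    intro m
    have hstep : ∀ m : ℕ,
        gPart s (m + 1) c' + 1 / (x ^ (∑ k ∈ Finset.range (m + 1), c' k) * (x - 1))
        ≤ gPart s m c' + 1 / (x ^ (∑ k ∈ Finset.range m, c' k) * (x - 1)) := by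
      intro m
      have h1 : gPart s (m + 1) c' = gPart s m c' + sTerm s c' m := by
        unfold gPart; rw [Finset.sum_range_succ]
      have h2 : ∑ k ∈ Finset.range (m + 1), c' k = (∑ k ∈ Finset.range m, c' k) + c' m :=
        Finset.sum_range_succ _ _
      rw [h1, h2]
      have h3 := step_ineq hx1 (∑ k ∈ Finset.range m, c' k) (c' m)
      unfold sTerm
      rw [h2]
      linarith
    have hanti : ∀ b : ℕ, n ≤ b →
        gPart s b c' + 1 / (x ^ (∑ k ∈ Finset.range b, c' k) * (x - 1))
        ≤ gPart s n c' + 1 / (x ^ (∑ k ∈ Finset.range n, c' k) * (x - 1)) := by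
      intro b hb
      induction b, hb using Nat.le_induction with
      | base => exact le_refl _
      | succ b hb ih => exact le_trans (hstep b) ih
    have hBn : gPart s n c' + 1 / (x ^ (∑ k ∈ Finset.range n, c' k) * (x - 1))
        = gPart s n c + 1 / (x ^ σ * (x - 1)) := by
      rw [gPart_congr s n c c' hpre', hσdef,
        Finset.sum_congr rfl fun k hk => hpre' k (Finset.mem_range.mp hk)]
    have hgp : ∑ k ∈ Finset.range m, sTerm s c' k = gPart s m c' := rfl
    rw [hgp]
    rcases le_total m n with hmn | hnm
    · have h1 : gPart s m c' ≤ gPart s n c' := by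
        unfold gPart
        exact Finset.sum_le_sum_of_subset_of_nonneg
          (Finset.range_subset_range.mpr hmn) (fun k _ _ => hterm_nonneg k)
      have h3 : gPart s n c' = gPart s n c := gPart_congr s n c c' hpre'
      linarith
    · have h1 := (hanti m hnm).trans_eq hBn
      have h2 : (0:ℝ) ≤ 1 / (x ^ (∑ k ∈ Finset.range m, c' k) * (x - 1)) :=
        le_of_lt (div_pos one_pos (mul_pos (pow_pos hx0 _) (by linarith)))
      linarith
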